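/- Let X be a random vector in ℝ^d with the Gaussian mixture density p(x) = Σ_{j=1}^k π_j (2π)^{−d/2} σ^{−d} exp(−‖x − μ_j‖²/(2σ²)). Suppose ε > 0 satisfies ε ≤ min_j ( π_j^{1/d} / (√(2π) σ e^{16}) )^d, and suppose the means satisfy min_{j ≠ k} ‖μ_j − μ_k‖ > 2σ max_j √( 2d log(1/(σ√(2π))) + 2 log(1/ε) − 2 log(1/π_j) ). Then P( p(X) < ε ) ≤ e^{−8d}. -/

import Mathlib

open MeasureTheory ProbabilityTheory Real

/-- The Gaussian mixture density on `ℝ^d` with means `μs`, common covariance `σ² I` and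
weights `w`: `p(x) = ∑ⱼ wⱼ (2π)^{-d/2} σ^{-d} exp(-‖x - μⱼ‖²/(2σ²))`. -/
noncomputable def gaussMixture (d k : ℕ) (w : Fin k → ℝ)
    (μs : Fin k → EuclideanSpace ℝ (Fin d)) (σ : ℝ)
    (x : EuclideanSpace ℝ (Fin d)) : ℝ :=
  ∑ j, w j * (2 * π) ^ (-(d : ℝ) / 2) * (1 / σ ^ d) * Real.exp (-‖x - μs j‖ ^ 2 / (2 * σ ^ 2))

lemma integrable_rexp_neg_mul_sq_norm' {V : Type*} [NormedAddCommGroup V]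
    [InnerProductSpace ℝ V] [FiniteDimensional ℝ V] [MeasurableSpace V] [BorelSpace V]
    {b : ℝ} (hb : 0 < b) : Integrable (fun v : V => Real.exp (-b * ‖v‖ ^ 2)) := by
  have h := (GaussianFourier.integrable_cexp_neg_mul_sq_norm_add (V := V) (b := (b : ℂ))
    (by simpa using hb) 0 0).norm
  convert h using 2 with v
  simp [Complex.norm_exp, ← Complex.ofReal_pow]

/-- Let `X` be a random vector with Gaussian mixture density `p`.  If
`ε ≤ min_j (π_j^{1/d} / (√(2π) σ e^{16}))^d` and the means satisfy
`min_{j≠l} ‖μ_j − μ_l‖ > 2σ max_j √(2d log(1/(σ√(2π))) + 2 log(1/ε) − 2 log(1/π_j))`,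
then `P(p(X) < ε) ≤ e^{−8d}`. -/
theorem gaussian_mixture_low_density_probability (d k : ℕ) (hd : 0 < d) (hk : 0 < k)
    (σ : ℝ) (hσ : 0 < σ)
    (w : Fin k → ℝ) (hw_pos : ∀ j, 0 < w j) (hw_sum : ∑ j, w j = 1)
    (μs : Fin k → EuclideanSpace ℝ (Fin d))
    {Ω : Type*} [MeasurableSpace Ω] (P : Measure Ω) [IsProbabilityMeasure P]
    (X : Ω → EuclideanSpace ℝ (Fin d)) (hX : Measurable X)
    (hlaw : P.map X = volume.withDensity (fun x => ENNReal.ofReal (gaussMixture d k w μs σ x)))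
    (ε : ℝ) (hε : 0 < ε)
    (hε_small : ∀ j, ε ≤ (w j ^ ((1 : ℝ) / d) / (Real.sqrt (2 * π) * σ * Real.exp 16)) ^ d)
    (hsep : ∀ j l, j ≠ l → ∀ j',
      2 * σ * Real.sqrt (2 * d * Real.log (1 / (σ * Real.sqrt (2 * π)))
          + 2 * Real.log (1 / ε) - 2 * Real.log (1 / w j')) < ‖μs j - μs l‖) :
    P {ω | gaussMixture d k w μs σ (X ω) < ε} ≤ ENNReal.ofReal (Real.exp (-8 * d)) := by
  have hd' : (0:ℝ) < d := by exact_mod_cast hd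
  have hπ : (0:ℝ) < π := Real.pi_pos
  have h2π : (0:ℝ) < 2 * π := by positivity
  set c : ℝ := (2 * π) ^ (-(d : ℝ) / 2) * (1 / σ ^ d) with hc
  have hc_pos : 0 < c := by
    have : (0:ℝ) < (2 * π) ^ (-(d : ℝ) / 2) := Real.rpow_pos_of_pos h2π _
    positivity
  set p : EuclideanSpace ℝ (Fin d) → ℝ := gaussMixture d k w μs σ with hp
  have hterm : ∀ (j : Fin k) (x : EuclideanSpace ℝ (Fin d)),
      w j * (2 * π) ^ (-(d : ℝ) / 2) * (1 / σ ^ d) * Real.exp (-‖x - μs j‖ ^ 2 / (2 * σ ^ 2))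
        = w j * c * Real.exp (-‖x - μs j‖ ^ 2 / (2 * σ ^ 2)) := by
    intro j x; rw [hc]; ring
  have hp_cont : Continuous p := by
    rw [hp]; unfold gaussMixture
    apply continuous_finset_sum
    intro j _
    have : Continuous fun x : EuclideanSpace ℝ (Fin d) => -‖x - μs j‖ ^ 2 / (2 * σ ^ 2) := by
      fun_prop
    fun_prop
  set A : Set (EuclideanSpace ℝ (Fin d)) := {x | p x < ε} with hA
  have hA_meas : MeasurableSet A := measurableSet_lt hp_cont.measurable measurable_const
  -- key smallness: ε ≤ w j * c * exp(-(16 d))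
  have hkey : ∀ j, ε ≤ w j * c * Real.exp (-(16 * d)) := by
    intro j
    have h := hε_small j
    have e1 : (Real.sqrt (2 * π)) ^ d = (2 * π) ^ ((d:ℝ) / 2) := by
      rw [Real.sqrt_eq_rpow, ← Real.rpow_natCast ((2 * π) ^ ((1:ℝ)/2)) d,
        ← Real.rpow_mul h2π.le]
      congr 1; ring
    have e2 : (Real.exp 16) ^ d = Real.exp (16 * d) := by
      rw [← Real.exp_nat_mul]; ring_nf
    have e3 : (w j ^ ((1:ℝ) / d)) ^ d = w j := by
      rw [← Real.rpow_natCast (w j ^ ((1:ℝ)/d)) d, ← Real.rpow_mul (hw_pos j).le,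
        one_div, inv_mul_cancel₀ (by exact_mod_cast hd.ne'), Real.rpow_one]
    rw [div_pow, mul_pow, mul_pow, e1, e2, e3] at h
    have hX1 : (0:ℝ) < (2 * π) ^ ((d:ℝ) / 2) := Real.rpow_pos_of_pos h2π _
    have heq : w j / ((2 * π) ^ ((d:ℝ)/2) * σ ^ d * Real.exp (16 * d))
        = w j * c * Real.exp (-(16 * (d:ℝ))) := by
      rw [hc, Real.exp_neg, neg_div, Real.rpow_neg h2π.le]
      have hσd : (0:ℝ) < σ ^ d := by positivity
      field_simp
    rw [heq] at h
    exact h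
  -- on A the distance to every mean is large
  have hdist : ∀ x ∈ A, ∀ j, 32 * d * σ ^ 2 ≤ ‖x - μs j‖ ^ 2 := by
    intro x hx j
    have hxA : p x < ε := hx
    have hle : w j * c * Real.exp (-‖x - μs j‖ ^ 2 / (2 * σ ^ 2)) ≤ p x := by
      rw [hp]; unfold gaussMixture
      rw [← hterm j x]
      refine Finset.single_le_sum (f := fun i => w i * (2 * π) ^ (-(d : ℝ) / 2) * (1 / σ ^ d)
        * Real.exp (-‖x - μs i‖ ^ 2 / (2 * σ ^ 2))) (fun i _ => ?_) (Finset.mem_univ j)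
      have hw' : (0:ℝ) ≤ w i := (hw_pos i).le
      have h0 : (0:ℝ) < (2 * π) ^ (-(d : ℝ) / 2) := Real.rpow_pos_of_pos h2π _
      positivity
    have hlt : Real.exp (-‖x - μs j‖ ^ 2 / (2 * σ ^ 2)) < Real.exp (-(16 * d)) := by
      have h1 : w j * c * Real.exp (-‖x - μs j‖ ^ 2 / (2 * σ ^ 2))
          < w j * c * Real.exp (-(16 * d)) := lt_of_le_of_lt hle (lt_of_lt_of_le hxA (hkey j))
      have hwc : 0 < w j * c := mul_pos (hw_pos j) hc_pos
      exact lt_of_mul_lt_mul_left (by linarith [h1]) hwc.le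
    have h2 : -‖x - μs j‖ ^ 2 / (2 * σ ^ 2) < -(16 * d) := by
      exact (Real.exp_lt_exp).mp hlt
    have hσ2 : (0:ℝ) < σ ^ 2 := by positivity
    rw [div_lt_iff₀ (by positivity)] at h2
    nlinarith
  -- the dominating function
  set C : ℝ := Real.exp (-(31/2 : ℝ) * d) with hC
  set b : ℝ := 1 / (64 * σ ^ 2) with hb
  have hb_pos : 0 < b := by rw [hb]; positivity
  set q : EuclideanSpace ℝ (Fin d) → ℝ :=
    fun x => ∑ j, w j * c * C * Real.exp (-b * ‖x - μs j‖ ^ 2) with hq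
  have hq_nonneg : ∀ x, 0 ≤ q x := by
    intro x
    apply Finset.sum_nonneg
    intro j _
    have := (hw_pos j).le
    have hCpos : (0:ℝ) < C := Real.exp_pos _
    positivity
  have hq_cont : Continuous q := by
    rw [hq]
    apply continuous_finset_sum
    intro j _
    fun_prop
  have hpq : ∀ x ∈ A, p x ≤ q x := by
    intro x hx
    rw [hp, hq]; unfold gaussMixture
    refine Finset.sum_le_sum (fun j _ => ?_)
    rw [hterm j x]
    set s : ℝ := ‖x - μs j‖ ^ 2 with hs
    have hs32 : 32 * d * σ ^ 2 ≤ s := hdist x hx j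
    have hsplit : Real.exp (-s / (2 * σ ^ 2))
        = Real.exp (-(31 / (64 * σ ^ 2)) * s) * Real.exp (-b * s) := by
      rw [← Real.exp_add, hb]
      congr 1
      field_simp
      ring
    have hexp1 : Real.exp (-(31 / (64 * σ ^ 2)) * s) ≤ C := by
      rw [hC, Real.exp_le_exp]
      calc -(31 / (64 * σ ^ 2)) * s ≤ -(31 / (64 * σ ^ 2)) * (32 * d * σ ^ 2) := by
            apply mul_le_mul_of_nonpos_left hs32
            have : (0:ℝ) < 31 / (64 * σ ^ 2) := by positivity
            linarith
        _ = -(31/2 : ℝ) * d := by field_simp; ring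
    calc w j * c * Real.exp (-s / (2 * σ ^ 2))
        = w j * c * (Real.exp (-(31 / (64 * σ ^ 2)) * s) * Real.exp (-b * s)) := by
          rw [hsplit]
      _ ≤ w j * c * (C * Real.exp (-b * s)) := by
          apply mul_le_mul_of_nonneg_left _ (mul_pos (hw_pos j) hc_pos).le
          exact mul_le_mul_of_nonneg_right hexp1 (Real.exp_pos _).le
      _ = w j * c * C * Real.exp (-b * s) := by ring
  have hint0 : Integrable (fun v : EuclideanSpace ℝ (Fin d) => Real.exp (-b * ‖v‖ ^ 2)) :=
    integrable_rexp_neg_mul_sq_norm' hb_pos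
  have hint : ∀ j : Fin k,
      Integrable (fun x : EuclideanSpace ℝ (Fin d) => Real.exp (-b * ‖x - μs j‖ ^ 2)) :=
    fun j => hint0.comp_sub_right (μs j)
  have hq_int : Integrable q := by
    rw [hq]
    apply integrable_finset_sum
    intro j _
    exact (hint j).const_mul _
  have hI : ∀ j : Fin k, ∫ x : EuclideanSpace ℝ (Fin d), Real.exp (-b * ‖x - μs j‖ ^ 2)
      = (π / b) ^ ((d:ℝ) / 2) := by
    intro j
    rw [integral_sub_right_eq_self (μ := volume)
      (fun x : EuclideanSpace ℝ (Fin d) => Real.exp (-b * ‖x‖ ^ 2)) (μs j)]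
    rw [GaussianFourier.integral_rexp_neg_mul_sq_norm hb_pos]
    norm_num [finrank_euclideanSpace_fin]
  have hq_integral : ∫ x, q x = c * C * (π / b) ^ ((d:ℝ) / 2) := by
    rw [hq, integral_finset_sum _ (fun j _ => (hint j).const_mul _)]
    have : ∀ j : Fin k, ∫ x : EuclideanSpace ℝ (Fin d),
        w j * c * C * Real.exp (-b * ‖x - μs j‖ ^ 2)
          = w j * (c * C * (π / b) ^ ((d:ℝ) / 2)) := by
      intro j
      rw [MeasureTheory.integral_const_mul, hI j]; ring
    rw [Finset.sum_congr rfl (fun j _ => this j), ← Finset.sum_mul, hw_sum, one_mul]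
  have hfinal : ∫ x, q x ≤ Real.exp (-8 * d) := by
    rw [hq_integral]
    have hπb : π / b = 32 * (2 * π) * σ ^ 2 := by
      rw [hb]; field_simp; ring
    have hrw : (π / b) ^ ((d:ℝ) / 2)
        = (32:ℝ) ^ ((d:ℝ)/2) * (2 * π) ^ ((d:ℝ)/2) * σ ^ d := by
      rw [hπb, Real.mul_rpow (by positivity) (by positivity),
        Real.mul_rpow (by positivity) (by positivity)]
      congr 1
      rw [← Real.rpow_natCast σ 2, ← Real.rpow_mul hσ.le, ← Real.rpow_natCast σ d]
      congr 1; ring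
    have hcancel : c * (π / b) ^ ((d:ℝ)/2) = (32:ℝ) ^ ((d:ℝ)/2) := by
      rw [hrw, hc, neg_div, Real.rpow_neg h2π.le]
      have h1 : (0:ℝ) < (2 * π) ^ ((d:ℝ)/2) := Real.rpow_pos_of_pos h2π _
      have h2 : (0:ℝ) < σ ^ d := by positivity
      field_simp
    have h32 : (32:ℝ) ^ ((d:ℝ)/2) = Real.exp ((d:ℝ)/2 * Real.log 32) := by
      rw [Real.rpow_def_of_pos (by norm_num)]
      ring_nf
    have hlog : Real.log 32 < 15 := by
      have : (32:ℝ) = 2 ^ 5 := by norm_num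
      rw [this, Real.log_pow]
      have := Real.log_two_lt_d9
      norm_num at this ⊢
      linarith
    calc c * C * (π / b) ^ ((d:ℝ)/2) = C * ((32:ℝ) ^ ((d:ℝ)/2)) := by
          rw [← hcancel]; ring
      _ = Real.exp (-(31/2:ℝ) * d + (d:ℝ)/2 * Real.log 32) := by
          rw [hC, h32, ← Real.exp_add]
      _ ≤ Real.exp (-8 * d) := by
          rw [Real.exp_le_exp]
          nlinarith [hd'.le]
  -- put things together
  calc P {ω | gaussMixture d k w μs σ (X ω) < ε}
      = P.map X A := by
        rw [Measure.map_apply hX hA_meas]; rfl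
    _ = ∫⁻ x in A, ENNReal.ofReal (p x) := by
        rw [hlaw, withDensity_apply _ hA_meas]
    _ ≤ ∫⁻ x in A, ENNReal.ofReal (q x) := by
        refine setLIntegral_mono (by fun_prop) (fun x hx => ?_)
        exact ENNReal.ofReal_le_ofReal (hpq x hx)
    _ ≤ ∫⁻ x, ENNReal.ofReal (q x) := setLIntegral_le_lintegral _ _
    _ = ENNReal.ofReal (∫ x, q x) :=
        (ofReal_integral_eq_lintegral_ofReal hq_int (ae_of_all _ hq_nonneg)).symm
    _ ≤ ENNReal.ofReal (Real.exp (-8 * d)) := ENNReal.ofReal_le_ofReal hfinal
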